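/- Let P be an orthogonal projection and U a unitary on a Hilbert space F. Define Ψ(z) = P(I - zU*P^⊥)⁻¹U*P restricted to Ran P, for z in the open unit disc. Then Ψ(z) is a well-defined contraction on Ran P for every z ∈ 𝔻, i.e., ‖Ψ(z)‖ ≤ 1. -/

import Mathlib

set_option maxHeartbeats 1000000

open ContinuousLinearMap

local notation "⟪" x ", " y "⟫" => @inner ℂ _ _ x y

private lemma proj_apply_norm_le {F : Type*} [NormedAddCommGroup F]
    [InnerProductSpace ℂ F] [CompleteSpace F]
    (Q : F →L[ℂ] F) (hQ : IsSelfAdjoint Q) (hQ2 : Q ∘L Q = Q) (x : F) : ‖Q x‖ ≤ ‖x‖ := by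
  have hQQ : Q (Q x) = Q x := congrFun (congrArg DFunLike.coe hQ2) x
  have h0 : ⟪Q x, Q x⟫ = ⟪x, Q x⟫ := by
    have h1 := adjoint_inner_left Q (Q x) x
    rw [hQ.adjoint_eq, hQQ] at h1
    exact h1
  have h3 : ‖Q x‖ ^ 2 = RCLike.re ⟪x, Q x⟫ := by
    rw [← h0, inner_self_eq_norm_sq]
  have h4 : RCLike.re ⟪x, Q x⟫ ≤ ‖x‖ * ‖Q x‖ := by
    calc RCLike.re ⟪x, Q x⟫ ≤ ‖⟪x, Q x⟫‖ := RCLike.re_le_norm _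
      _ ≤ ‖x‖ * ‖Q x‖ := norm_inner_le_norm _ _
  nlinarith [norm_nonneg (Q x), norm_nonneg x]

/-- The realization formula `Ψ(z) = P(I - zU*P^⊥)⁻¹U*P` (a compression to `Ran P`) is
well defined and contractive for every `z` in the open unit disc: `I - zU*P^⊥` is
invertible, and the compressed operator has norm at most `1`. -/
theorem realization_contractive {F : Type*} [NormedAddCommGroup F]
    [InnerProductSpace ℂ F] [CompleteSpace F]
    (P U : F →L[ℂ] F) (hP : IsSelfAdjoint P) (hP2 : P ∘L P = P)
    (hU1 : adjoint U ∘L U = 1) (hU2 : U ∘L adjoint U = 1) :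
    ∀ z : ℂ, ‖z‖ < 1 →
      IsUnit ((1 : F →L[ℂ] F) - z • (adjoint U ∘L (1 - P))) ∧
      ‖P ∘L Ring.inverse ((1 : F →L[ℂ] F) - z • (adjoint U ∘L (1 - P)))
          ∘L (adjoint U ∘L P)‖ ≤ 1 := by
  intro z hz
  set Q : F →L[ℂ] F := 1 - P with hQdef
  have hQsa : IsSelfAdjoint Q := IsSelfAdjoint.sub (IsSelfAdjoint.one _) hP
  have hP2' : P * P = P := by rw [mul_def]; exact hP2
  have hQ2 : Q ∘L Q = Q := by
    rw [← mul_def, hQdef, sub_mul, mul_sub, mul_sub, one_mul, mul_one, hP2']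
    abel
  have hQP : Q ∘L P = 0 := by
    rw [← mul_def, hQdef, sub_mul, one_mul, hP2', sub_self]
  have hPQ : P ∘L Q = 0 := by
    rw [← mul_def, hQdef, mul_sub, mul_one, hP2', sub_self]
  have hUUad : ∀ v : F, U (adjoint U v) = v := fun v =>
    congrFun (congrArg DFunLike.coe hU2) v
  have hUadU : ∀ v : F, adjoint U (U v) = v := fun v =>
    congrFun (congrArg DFunLike.coe hU1) v
  have hUadn : ∀ x : F, ‖adjoint U x‖ = ‖x‖ := by
    intro x
    have h1 := adjoint_inner_left U (adjoint U x) x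
    rw [hUUad] at h1
    have := congrArg RCLike.re h1
    rw [inner_self_eq_norm_sq, inner_self_eq_norm_sq] at this
    nlinarith [norm_nonneg (adjoint U x), norm_nonneg x]
  have hUn : ∀ x : F, ‖U x‖ = ‖x‖ := by
    intro x
    have h1 := adjoint_inner_left U x (U x)
    rw [hUadU] at h1
    have := congrArg RCLike.re h1.symm
    rw [inner_self_eq_norm_sq, inner_self_eq_norm_sq] at this
    nlinarith [norm_nonneg (U x), norm_nonneg x]
  -- invertibility
  have hAnorm : ‖z • (adjoint U ∘L Q)‖ < 1 := by
    have h1 : ‖adjoint U ∘L Q‖ ≤ 1 := by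
      apply opNorm_le_bound _ zero_le_one
      intro x
      rw [comp_apply, hUadn, one_mul]
      exact proj_apply_norm_le Q hQsa hQ2 x
    calc ‖z • (adjoint U ∘L Q)‖ = ‖z‖ * ‖adjoint U ∘L Q‖ := norm_smul z _
      _ ≤ ‖z‖ * 1 := by nlinarith [norm_nonneg z]
      _ < 1 := by linarith
  have hu : IsUnit ((1 : F →L[ℂ] F) - z • (adjoint U ∘L Q)) :=
    (Units.oneSub _ hAnorm).isUnit
  refine ⟨hu, ?_⟩
  apply opNorm_le_bound _ zero_le_one
  intro x
  set w : F := P x with hw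
  set y : F := Ring.inverse ((1 : F →L[ℂ] F) - z • (adjoint U ∘L Q)) (adjoint U w) with hy
  -- the operator applied to x is P y
  have happ : (P ∘L Ring.inverse ((1 : F →L[ℂ] F) - z • (adjoint U ∘L Q))
      ∘L (adjoint U ∘L P)) x = P y := rfl
  -- key equation: (1 - z A) y = U* w, hence w = U y - z • Q y
  have hkey : adjoint U w = y - z • (adjoint U (Q y)) := by
    have h1 := Ring.mul_inverse_cancel _ hu
    have h2 := congrArg (fun T : F →L[ℂ] F => T (adjoint U w)) h1
    simp only [ContinuousLinearMap.mul_apply, one_apply] at h2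
    have h3 : ((1 : F →L[ℂ] F) - z • (adjoint U ∘L Q)) y = y - z • (adjoint U (Q y)) := by
      rw [sub_apply, smul_apply, ContinuousLinearMap.one_apply, comp_apply]
    rw [← h3]
    exact h2.symm
  have hweq : w = U y - z • Q y := by
    have h1 := congrArg U hkey
    rw [map_sub, map_smul, hUUad, hUUad] at h1
    exact h1
  -- Q w = 0
  have hQw : Q w = 0 := by
    have h1 : (Q ∘L P) x = (0 : F →L[ℂ] F) x := by rw [hQP]
    simpa [comp_apply, hw] using h1
  -- Q (U y) = z • Q y
  have hQQy : Q (Q y) = Q y := congrFun (congrArg DFunLike.coe hQ2) y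
  have hQUy : Q (U y) = z • Q y := by
    have h1 := congrArg Q hweq
    rw [hQw, map_sub, map_smul, hQQy] at h1
    exact sub_eq_zero.mp h1.symm
  -- inner product computation
  have hinner : ⟪U y, z • Q y⟫ = (‖z‖ : ℂ) ^ 2 * (‖Q y‖ : ℂ) ^ 2 := by
    have h1 : ⟪U y, Q y⟫ = ⟪Q (U y), Q y⟫ := by
      have h2 := adjoint_inner_left Q (Q y) (U y)
      rw [hQsa.adjoint_eq, hQQy] at h2
      exact h2.symm
    rw [inner_smul_right, h1, hQUy, inner_smul_left, inner_self_eq_norm_sq_to_K]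
    rw [← mul_assoc, mul_comm z (starRingEnd ℂ z), RCLike.conj_mul]
    norm_cast
  -- norm identities
  have hUy : ‖U y‖ = ‖y‖ := hUn y
  have hysplit : ‖y‖ ^ 2 = ‖P y‖ ^ 2 + ‖Q y‖ ^ 2 := by
    have hsum : y = P y + Q y := by
      rw [hQdef]
      simp only [sub_apply, one_apply]
      abel
    have horth : ⟪P y, Q y⟫ = (0 : ℂ) := by
      have h2 := adjoint_inner_left P (Q y) y
      rw [hP.adjoint_eq] at h2
      have h3 : P (Q y) = 0 := by
        have h4 : (P ∘L Q) y = (0 : F →L[ℂ] F) y := by rw [hPQ]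
        simpa [comp_apply] using h4
      rw [h3, inner_zero_right] at h2
      exact h2
    calc ‖y‖ ^ 2 = ‖P y + Q y‖ ^ 2 := by rw [← hsum]
      _ = ‖P y‖ ^ 2 + 2 * RCLike.re ⟪P y, Q y⟫ + ‖Q y‖ ^ 2 := norm_add_sq _ _
      _ = ‖P y‖ ^ 2 + ‖Q y‖ ^ 2 := by rw [horth]; simp
  have hwsq : ‖w‖ ^ 2 = ‖P y‖ ^ 2 + (1 - ‖z‖ ^ 2) * ‖Q y‖ ^ 2 := by
    have h1 : ‖w‖ ^ 2 = ‖U y‖ ^ 2 - 2 * RCLike.re ⟪U y, z • Q y⟫ + ‖z • Q y‖ ^ 2 := by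
      rw [hweq]; exact norm_sub_sq _ _
    have h2 : RCLike.re ⟪U y, z • Q y⟫ = ‖z‖ ^ 2 * ‖Q y‖ ^ 2 := by
      rw [hinner]; norm_cast
    have h3 : ‖z • Q y‖ ^ 2 = ‖z‖ ^ 2 * ‖Q y‖ ^ 2 := by
      rw [norm_smul]; ring
    rw [h1, h2, h3, hUy, hysplit]; ring
  have hPyle : ‖P y‖ ≤ ‖w‖ := by
    nlinarith [norm_nonneg (P y), norm_nonneg w, norm_nonneg (Q y),
      mul_nonneg (by nlinarith [hz, norm_nonneg z] : (0:ℝ) ≤ 1 - ‖z‖ ^ 2) (sq_nonneg ‖Q y‖)]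
  have hwle : ‖w‖ ≤ ‖x‖ := proj_apply_norm_le P hP hP2 x
  rw [happ, one_mul]
  exact hPyle.trans hwle
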